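/- Let G be a finite group, K ⊴ G a normal subgroup, and C, D ∈ G/K cosets. For g ∈ G let φ^g denote the endomorphism of the abelianization K/K' given by φ^g(kK') = (g⁻¹kg k⁻¹)K' (well-defined since conjugation by g preserves K). If there exist g ∈ C, h ∈ D with gh = hg, then |{(a,b) ∈ C × D : ab = ba}|/|K|² ≤ |im φ^C ∩ im φ^D| / (|im φ^C| · |im φ^D|), where φ^C = φ^g and φ^D = φ^h (these images are independent of the coset representatives when the representatives commute as assumed). -/

import Mathlib

open Subgroup

section aux
variable {G : Type*} [Group G]

lemma card_ker_mul_card_range {B A : Type*} [Group B] [Group A] (f : B →* A) :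
    Nat.card f.ker * Nat.card f.range = Nat.card B := by
  rw [Subgroup.card_eq_card_quotient_mul_card_subgroup f.ker,
    Nat.card_congr (QuotientGroup.quotientKerEquivRange f).toEquiv, mul_comm]

/-- The homomorphism version of the map in `phiIm`. -/
noncomputable def phiHom (K : Subgroup G) [K.Normal] (g : G) : K →* Abelianization K :=
  (Abelianization.of.comp (MulAut.conjNormal g⁻¹ : MulAut K).toMonoidHom) * Abelianization.of⁻¹

lemma phiHom_apply (K : Subgroup G) [hN : K.Normal] (g : G) (k : K) :
    phiHom K g k = Abelianization.of
      (⟨g⁻¹ * (k : G) * g, by simpa using hN.conj_mem _ k.2 g⁻¹⟩ * k⁻¹ : K) := by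
  have : ((MulAut.conjNormal g⁻¹ : MulAut K).toMonoidHom k : K) =
      ⟨g⁻¹ * (k : G) * g, by simpa using hN.conj_mem _ k.2 g⁻¹⟩ := by
    ext; simp
  simp only [phiHom, MonoidHom.mul_apply, MonoidHom.inv_apply, MonoidHom.coe_comp,
    Function.comp_apply]
  rw [this, map_mul, map_inv]
end aux

/-- The image of the map `kK' ↦ (g⁻¹ k g k⁻¹) K'` on the abelianization of `K`. -/
def phiIm {G : Type*} [Group G] (K : Subgroup G) [hN : K.Normal] (g : G) :
    Set (Abelianization K) :=
  Set.range fun k : K =>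
    Abelianization.of (⟨g⁻¹ * (k : G) * g, by simpa using hN.conj_mem _ k.2 g⁻¹⟩ * k⁻¹ : K)

lemma phiIm_eq {G : Type*} [Group G] (K : Subgroup G) [K.Normal] (g : G) :
    phiIm K g = ((phiHom K g).range : Set (Abelianization K)) := by
  rw [MonoidHom.coe_range]
  exact congrArg Set.range (funext fun k => (phiHom_apply K g k).symm)

section count
variable {B A : Type*} [Group B] [Finite B] [CommGroup A] (f₁ f₂ : B →* A)

noncomputable def pairHom : B × B →* A :=
  (f₁.comp (MonoidHom.fst B B)) * (f₂.comp (MonoidHom.snd B B))⁻¹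

lemma pairHom_ker (p : B × B) : p ∈ (pairHom f₁ f₂).ker ↔ f₁ p.1 = f₂ p.2 := by
  simp [pairHom, MonoidHom.mem_ker, mul_inv_eq_one]

noncomputable def rangeHom : f₁.range × f₂.range →* A :=
  (f₁.range.subtype.comp (MonoidHom.fst _ _)) * (f₂.range.subtype.comp (MonoidHom.snd _ _))⁻¹

lemma rangeHom_range : (rangeHom f₁ f₂).range = (pairHom f₁ f₂).range := by
  ext a
  simp only [MonoidHom.mem_range, rangeHom, pairHom, MonoidHom.mul_apply, MonoidHom.inv_apply,
    MonoidHom.coe_comp, Function.comp_apply, Subgroup.coe_subtype, MonoidHom.coe_fst, MonoidHom.coe_snd,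
    Prod.exists]
  constructor
  · rintro ⟨⟨u, x, hx⟩, ⟨v, y, hy⟩, h⟩
    exact ⟨x, y, by simpa [hx, hy] using h⟩
  · rintro ⟨x, y, h⟩
    exact ⟨⟨f₁ x, x, rfl⟩, ⟨f₂ y, y, rfl⟩, by simpa using h⟩

noncomputable def rangeHomKerEquiv :
    (rangeHom f₁ f₂).ker ≃ ↥(f₁.range ⊓ f₂.range) where
  toFun p := ⟨(p.1.1 : A), p.1.1.2, by
      have : (p.1.1 : A) * (p.1.2 : A)⁻¹ = 1 := p.2
      rw [show (p.1.1 : A) = (p.1.2 : A) from by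
        rwa [mul_inv_eq_one] at this]
      exact p.1.2.2⟩
  invFun a := ⟨(⟨a.1, a.2.1⟩, ⟨a.1, a.2.2⟩), by simp [rangeHom, MonoidHom.mem_ker]⟩
  left_inv p := by
    have : (p.1.1 : A) = (p.1.2 : A) := by
      have h : (p.1.1 : A) * (p.1.2 : A)⁻¹ = 1 := p.2
      rwa [mul_inv_eq_one] at h
    ext <;> simp [this]
  right_inv a := rfl

lemma count_eq : Nat.card {p : B × B // f₁ p.1 = f₂ p.2} *
    (Nat.card f₁.range * Nat.card f₂.range) =
    Nat.card ↥(f₁.range ⊓ f₂.range) * Nat.card B ^ 2 := by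
  have e1 : Nat.card {p : B × B // f₁ p.1 = f₂ p.2} = Nat.card (pairHom f₁ f₂).ker :=
    Nat.card_congr (Equiv.subtypeEquivRight fun p => (pairHom_ker f₁ f₂ p).symm)
  have e2 : Nat.card (pairHom f₁ f₂).ker * Nat.card (pairHom f₁ f₂).range
      = Nat.card B ^ 2 := by
    rw [card_ker_mul_card_range, Nat.card_prod, sq]
  have e3 : Nat.card (rangeHom f₁ f₂).ker * Nat.card (pairHom f₁ f₂).range
      = Nat.card f₁.range * Nat.card f₂.range := by
    rw [← rangeHom_range, card_ker_mul_card_range, Nat.card_prod]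
  have e4 : Nat.card (rangeHom f₁ f₂).ker = Nat.card ↥(f₁.range ⊓ f₂.range) :=
    Nat.card_congr (rangeHomKerEquiv f₁ f₂)
  calc Nat.card {p : B × B // f₁ p.1 = f₂ p.2} * (Nat.card f₁.range * Nat.card f₂.range)
      = Nat.card (pairHom f₁ f₂).ker *
        (Nat.card (rangeHom f₁ f₂).ker * Nat.card (pairHom f₁ f₂).range) := by rw [e1, e3]
    _ = Nat.card (rangeHom f₁ f₂).ker *
        (Nat.card (pairHom f₁ f₂).ker * Nat.card (pairHom f₁ f₂).range) := by ring
    _ = Nat.card ↥(f₁.range ⊓ f₂.range) * Nat.card B ^ 2 := by rw [e2, e4]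
end count
theorem coset_commuting_bound {G : Type*} [Group G] [Finite G]
    (K : Subgroup G) [K.Normal] (g h : G) (hcomm : g * h = h * g) :
    (Nat.card {p : G × G //
        g⁻¹ * p.1 ∈ K ∧ h⁻¹ * p.2 ∈ K ∧ p.1 * p.2 = p.2 * p.1} : ℚ) /
        (Nat.card K : ℚ) ^ 2 ≤
      (Nat.card ↥(phiIm K g ∩ phiIm K h) : ℚ) /
        ((Nat.card ↥(phiIm K g) : ℚ) * (Nat.card ↥(phiIm K h) : ℚ)) := by
  classical
  have hinv : h⁻¹ * g⁻¹ = g⁻¹ * h⁻¹ := by rw [← mul_inv_rev, ← mul_inv_rev, hcomm]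
  -- the key map from commuting pairs to pairs with equal phi-values
  have key : ∀ p : G × G, ∀ hx : g⁻¹ * p.1 ∈ K, ∀ hy : h⁻¹ * p.2 ∈ K,
      p.1 * p.2 = p.2 * p.1 →
      phiHom K h ⟨g⁻¹ * p.1, hx⟩ = phiHom K g ⟨h⁻¹ * p.2, hy⟩ := by
    rintro ⟨a, b⟩ hx hy hab
    set x : K := ⟨g⁻¹ * a, hx⟩
    set y : K := ⟨h⁻¹ * b, hy⟩
    have hKN : K.Normal := inferInstance
    have hxK : h⁻¹ * (x : G) * h ∈ K := by simpa using hKN.conj_mem _ x.2 h⁻¹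
    have hyK : g⁻¹ * (y : G) * g ∈ K := by simpa using hKN.conj_mem _ y.2 g⁻¹
    have hK : (⟨h⁻¹ * (x : G) * h, hxK⟩ : K) * y = (⟨g⁻¹ * (y : G) * g, hyK⟩ : K) * x := by
      ext
      show h⁻¹ * (g⁻¹ * a) * h * (h⁻¹ * b) = g⁻¹ * (h⁻¹ * b) * g * (g⁻¹ * a)
      have e1 : h⁻¹ * (g⁻¹ * a) * h * (h⁻¹ * b) = h⁻¹ * g⁻¹ * (a * b) := by group
      have e2 : g⁻¹ * (h⁻¹ * b) * g * (g⁻¹ * a) = g⁻¹ * h⁻¹ * (b * a) := by group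
      rw [e1, e2, hinv, hab]
    have h2 : Abelianization.of (⟨h⁻¹ * (x : G) * h, hxK⟩ : K) * Abelianization.of y
        = Abelianization.of (⟨g⁻¹ * (y : G) * g, hyK⟩ : K) * Abelianization.of x := by
      rw [← map_mul, ← map_mul, hK]
    rw [phiHom_apply, phiHom_apply, map_mul, map_mul, map_inv, map_inv]
    simpa [div_eq_mul_inv] using div_eq_div_iff_mul_eq_mul.mpr h2
  set S := {p : G × G // g⁻¹ * p.1 ∈ K ∧ h⁻¹ * p.2 ∈ K ∧ p.1 * p.2 = p.2 * p.1}
  set T := {p : K × K // phiHom K h p.1 = phiHom K g p.2}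
  have hcard : Nat.card S ≤ Nat.card T := by
    apply Nat.card_le_card_of_injective
      (fun p : S => (⟨(⟨g⁻¹ * p.1.1, p.2.1⟩, ⟨h⁻¹ * p.1.2, p.2.2.1⟩),
        key p.1 p.2.1 p.2.2.1 p.2.2.2⟩ : T))
    rintro ⟨⟨a, b⟩, _⟩ ⟨⟨a', b'⟩, _⟩ hpq
    simp only [Subtype.mk_eq_mk, Prod.mk.injEq, Subtype.mk_eq_mk] at hpq
    have := mul_left_cancel hpq.1
    have := mul_left_cancel hpq.2
    simp_all
  have hcount := count_eq (phiHom K h) (phiHom K g)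
  have hset : phiIm K g ∩ phiIm K h
      = (((phiHom K h).range ⊓ (phiHom K g).range : Subgroup _) : Set (Abelianization K)) := by
    rw [phiIm_eq K g, phiIm_eq K h, Set.inter_comm, Subgroup.coe_inf]
  rw [hset, phiIm_eq K g, phiIm_eq K h]
  have hk : 0 < (Nat.card K : ℚ) := by exact_mod_cast Nat.card_pos
  have hg1 : 0 < (Nat.card (phiHom K g).range : ℚ) := by exact_mod_cast Nat.card_pos
  have hh1 : 0 < (Nat.card (phiHom K h).range : ℚ) := by exact_mod_cast Nat.card_pos
  rw [div_le_div_iff₀ (by positivity) (by positivity)]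
  have hle : (Nat.card S : ℚ) * ((Nat.card (phiHom K g).range : ℚ) *
        (Nat.card (phiHom K h).range : ℚ))
      ≤ (Nat.card T : ℚ) * ((Nat.card (phiHom K h).range : ℚ) *
        (Nat.card (phiHom K g).range : ℚ)) := by
    rw [mul_comm (Nat.card (phiHom K g).range : ℚ)]
    exact mul_le_mul_of_nonneg_right (by exact_mod_cast hcard) (by positivity)
  calc (Nat.card S : ℚ) * ((Nat.card (phiHom K g).range : ℚ) *
        (Nat.card (phiHom K h).range : ℚ))
      ≤ (Nat.card T : ℚ) * ((Nat.card (phiHom K h).range : ℚ) *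
        (Nat.card (phiHom K g).range : ℚ)) := hle
    _ = (Nat.card ↥((phiHom K h).range ⊓ (phiHom K g).range) : ℚ) * (Nat.card K : ℚ) ^ 2 := by
        exact_mod_cast congrArg (Nat.cast : ℕ → ℚ) hcount
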